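/- arXiv:2208.12725 — 3 statements merged into one kernel-verified Lean document; each statement's English description precedes it below -/
import Mathlib

section
/- Let K be an algebraically closed field and let F and B be coprime homogeneous polynomials in K[x,y,z] such that F(x,y,0) and B(x,y,0) have no common root in ℙ¹. Then z is a non-zero divisor in the quotient ring K[x,y,z]/(F,B). -/
open Polynomial in
/-- A nonzero nonunit bivariate polynomial over an algebraically closed field has a
nontrivial zero. -/
lemma aux_exists_nontrivial_zero (K : Type) [Field K] [IsAlgClosed K]
    (d : MvPolynomial (Fin 2) K) (hd0 : d ≠ 0) (hdu : ¬ IsUnit d) :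
    ∃ a b : K, ¬ (a = 0 ∧ b = 0) ∧ MvPolynomial.eval ![a, b] d = 0 := by
  set D := MvPolynomial.finSuccEquiv K 1 d with hD
  have hD0 : D ≠ 0 := by
    simp only [hD, ne_eq, EmbeddingLike.map_eq_zero_iff]
    exact hd0
  rcases Nat.eq_zero_or_pos D.natDegree with h0 | hpos
  · -- `D` is a constant polynomial with coefficient `c` in `K[y]`
    have hDC : D = Polynomial.C (D.coeff 0) := Polynomial.eq_C_of_natDegree_eq_zero h0
    set c := D.coeff 0 with hc
    have hcne : c ≠ 0 := fun h => hD0 (by rw [hDC, h, map_zero])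
    have hcu : ¬ IsUnit c := by
      intro h
      apply hdu
      have h1 : IsUnit D := hDC ▸ (Polynomial.isUnit_C.mpr h)
      have h2 := h1.map (MvPolynomial.finSuccEquiv K 1).symm.toAlgHom
      simpa [hD] using h2
    -- pass from `c : MvPolynomial (Fin 1) K` to a univariate polynomial `c'`
    set ψ : MvPolynomial (Fin 1) K → Polynomial K :=
      fun p => Polynomial.map (MvPolynomial.eval (fun _ => (0 : K)))
        (MvPolynomial.finSuccEquiv K 0 p) with hψ
    have hinj : Function.Injective ψ := by
      apply Function.Injective.comp (g := Polynomial.map _)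
      · apply Polynomial.map_injective
        intro p q h
        obtain ⟨x, rfl⟩ := MvPolynomial.C_surjective (Fin 0) p
        obtain ⟨y, rfl⟩ := MvPolynomial.C_surjective (Fin 0) q
        rw [MvPolynomial.eval_C, MvPolynomial.eval_C] at h
        rw [h]
      · exact (MvPolynomial.finSuccEquiv K 0).injective
    set c' := ψ c with hc'
    have hc'0 : c' ≠ 0 := by
      intro h
      refine hcne (hinj ?_)
      rw [← hc', h]
      simp [hψ]
    have hψC : ∀ k : K, ψ (MvPolynomial.C k) = Polynomial.C k := by
      intro k
      rw [hψ]
      simp [MvPolynomial.finSuccEquiv_apply]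
    have hdeg : 0 < c'.natDegree := by
      rcases Nat.eq_zero_or_pos c'.natDegree with h | h
      · exfalso
        have hC : c' = Polynomial.C (c'.coeff 0) := Polynomial.eq_C_of_natDegree_eq_zero h
        have hk : c = MvPolynomial.C (c'.coeff 0) := by
          apply hinj
          rw [hψC, ← hC]
        have hk0 : c'.coeff 0 ≠ 0 := by
          intro h'
          rw [h', map_zero] at hk
          exact hcne hk
        exact hcu (hk ▸ (isUnit_iff_ne_zero.mpr hk0).map MvPolynomial.C)
      · exact h
    obtain ⟨b, hb⟩ := IsAlgClosed.exists_root c'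
      (Polynomial.natDegree_pos_iff_degree_pos.mp hdeg).ne'
    refine ⟨1, b, fun h => one_ne_zero h.1, ?_⟩
    have e1 := MvPolynomial.eval_eq_eval_mv_eval' ![b] (1 : K) d
    have e2 := MvPolynomial.eval_eq_eval_mv_eval' (fun _ : Fin 0 => (0 : K)) b c
    have hvec : (![b] : Fin 1 → K) = Fin.cons b (fun _ : Fin 0 => (0 : K)) := by
      funext i
      rw [Fin.eq_zero i]
      rfl
    have : MvPolynomial.eval ![(1 : K), b] d = MvPolynomial.eval ![b] c := by
      rw [show (![(1 : K), b] : Fin 2 → K) = Fin.cons 1 ![b] from rfl, e1, ← hD, hDC]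
      simp
    rw [this, hvec, e2]
    exact hb
  · -- `D` has positive degree in the first variable
    have hL : D.leadingCoeff ≠ 0 := Polynomial.leadingCoeff_ne_zero.mpr hD0
    have hLX : D.leadingCoeff * MvPolynomial.X 0 ≠ 0 :=
      mul_ne_zero hL (MvPolynomial.X_ne_zero 0)
    obtain ⟨v, hv⟩ : ∃ v : Fin 1 → K,
        MvPolynomial.eval v (D.leadingCoeff * MvPolynomial.X 0) ≠ 0 := by
      by_contra h
      push_neg at h
      exact hLX (MvPolynomial.funext fun x => by simpa using h x)
    rw [map_mul, MvPolynomial.eval_X] at hv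
    have hb0 : v 0 ≠ 0 := fun h => hv (by rw [h, mul_zero])
    have hLb : MvPolynomial.eval v D.leadingCoeff ≠ 0 :=
      fun h => hv (by rw [h, zero_mul])
    have hveq : (![v 0] : Fin 1 → K) = v := by
      funext i
      rw [Fin.eq_zero i]
      rfl
    set Dm := Polynomial.map (MvPolynomial.eval ![v 0]) D with hDm
    have hdegm : Dm.degree = D.degree := by
      apply Polynomial.degree_map_eq_of_leadingCoeff_ne_zero
      rw [hveq]
      exact hLb
    have hdm : Dm.degree ≠ 0 := by
      rw [hdegm]
      exact (Polynomial.natDegree_pos_iff_degree_pos.mp hpos).ne'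
    obtain ⟨a, ha⟩ := IsAlgClosed.exists_root Dm hdm
    refine ⟨a, v 0, fun h => hb0 h.2, ?_⟩
    have e1 := MvPolynomial.eval_eq_eval_mv_eval' ![v 0] a d
    rw [show (![a, v 0] : Fin 2 → K) = Fin.cons a ![v 0] from rfl, e1, ← hD, ← hDm]
    exact ha

/-- Two bivariate polynomials with no common nontrivial zero over an algebraically
closed field, not both zero, are relatively prime. -/
lemma aux_isRelPrime (K : Type) [Field K] [IsAlgClosed K]
    (f₀ g₀ : MvPolynomial (Fin 2) K) (hne : ¬ (f₀ = 0 ∧ g₀ = 0))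
    (h : ∀ a b : K, ¬ (a = 0 ∧ b = 0) →
      ¬ (MvPolynomial.eval ![a, b] f₀ = 0 ∧ MvPolynomial.eval ![a, b] g₀ = 0)) :
    IsRelPrime f₀ g₀ := by
  intro d hdf hdg
  by_contra hdu
  have hd0 : d ≠ 0 := by
    rintro rfl
    exact hne ⟨zero_dvd_iff.mp hdf, zero_dvd_iff.mp hdg⟩
  obtain ⟨a, b, hab, hz⟩ := aux_exists_nontrivial_zero K d hd0 hdu
  obtain ⟨e, he⟩ := hdf
  obtain ⟨e', he'⟩ := hdg
  exact h a b hab ⟨by rw [he, map_mul, hz, zero_mul],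
    by rw [he', map_mul, hz, zero_mul]⟩

open Polynomial in
/-- The key algebraic lemma: if the constant coefficients of `f` and `g` are relatively
prime (and that of `f` is nonzero), then `X * P ∈ (f, g)` implies `P ∈ (f, g)`. -/
lemma aux_key {S : Type} [CommRing S] [IsDomain S] [UniqueFactorizationMonoid S]
    (f g P : Polynomial S) (hf0 : f.coeff 0 ≠ 0)
    (hrel : IsRelPrime (f.coeff 0) (g.coeff 0))
    (h : Polynomial.X * P ∈ Ideal.span {f, g}) :
    P ∈ Ideal.span {f, g} := by
  obtain ⟨U, V, hUV⟩ := Ideal.mem_span_pair.mp h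
  have h0 : U.coeff 0 * f.coeff 0 + V.coeff 0 * g.coeff 0 = 0 := by
    have h1 := congrArg (fun q : Polynomial S => Polynomial.coeff q 0) hUV
    simpa [Polynomial.mul_coeff_zero] using h1
  have hdvd : f.coeff 0 ∣ V.coeff 0 * g.coeff 0 :=
    ⟨-U.coeff 0, by linear_combination h0⟩
  obtain ⟨c, hc⟩ := hrel.dvd_of_dvd_mul_right hdvd
  have hU0 : U.coeff 0 + c * g.coeff 0 = 0 := by
    have hz : f.coeff 0 * (U.coeff 0 + c * g.coeff 0) = 0 := by
      linear_combination h0 - g.coeff 0 * hc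
    exact (mul_eq_zero.mp hz).resolve_left hf0
  have hU' : Polynomial.X ∣ U + Polynomial.C c * g := by
    rw [Polynomial.X_dvd_iff, Polynomial.coeff_add, Polynomial.coeff_C_mul]
    exact hU0
  have hV' : Polynomial.X ∣ V - Polynomial.C c * f := by
    rw [Polynomial.X_dvd_iff, Polynomial.coeff_sub, Polynomial.coeff_C_mul, hc]
    ring
  obtain ⟨U₂, hU₂⟩ := hU'
  obtain ⟨V₂, hV₂⟩ := hV'
  have hkey : Polynomial.X * (U₂ * f + V₂ * g) = Polynomial.X * P := by
    calc Polynomial.X * (U₂ * f + V₂ * g)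
        = (Polynomial.X * U₂) * f + (Polynomial.X * V₂) * g := by ring
      _ = (U + Polynomial.C c * g) * f + (V - Polynomial.C c * f) * g := by
          rw [← hU₂, ← hV₂]
      _ = U * f + V * g := by ring
      _ = Polynomial.X * P := hUV
  have hP : U₂ * f + V₂ * g = P := mul_left_cancel₀ Polynomial.X_ne_zero hkey
  exact Ideal.mem_span_pair.mpr ⟨U₂, V₂, hP⟩

theorem z_nonZeroDivisor_of_no_common_root_at_infinity
    (K : Type) [Field K] [IsAlgClosed K]
    (F B : MvPolynomial (Fin 3) K) (dF dB : ℕ)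
    (hF : F.IsHomogeneous dF) (hB : B.IsHomogeneous dB)
    (hcop : ∀ d : MvPolynomial (Fin 3) K, d ∣ F → d ∣ B → IsUnit d)
    (hroot : ∀ a b : K, ¬ (a = 0 ∧ b = 0) →
      ¬ (MvPolynomial.eval ![a, b, 0] F = 0 ∧ MvPolynomial.eval ![a, b, 0] B = 0)) :
    Ideal.Quotient.mk (Ideal.span {F, B}) (MvPolynomial.X 2)
      ∈ nonZeroDivisors (MvPolynomial (Fin 3) K ⧸ Ideal.span {F, B}) := by
  classical
  rw [mem_nonZeroDivisors_iff_right]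
  intro q hq
  obtain ⟨p, rfl⟩ := Ideal.Quotient.mk_surjective q
  rw [← map_mul, Ideal.Quotient.eq_zero_iff_mem] at hq
  rw [Ideal.Quotient.eq_zero_iff_mem]
  -- move to `Polynomial (MvPolynomial (Fin 2) K)`, sending `z` to `Polynomial.X`
  set σ : Fin 3 ≃ Fin 3 := Equiv.swap 0 2 with hσ
  set E := (MvPolynomial.renameEquiv K σ).trans (MvPolynomial.finSuccEquiv K 2) with hE
  have hEX : E (MvPolynomial.X 2) = Polynomial.X := by
    rw [hE]
    simp only [AlgEquiv.trans_apply, MvPolynomial.renameEquiv_apply, MvPolynomial.rename_X,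
      hσ, Equiv.swap_apply_right]
    exact MvPolynomial.finSuccEquiv_X_zero
  have hcoeff : ∀ (r : MvPolynomial (Fin 3) K) (x₁ x₂ : K),
      MvPolynomial.eval ![x₁, x₂] ((E r).coeff 0) = MvPolynomial.eval ![x₂, x₁, 0] r := by
    intro r x₁ x₂
    have h1 := MvPolynomial.eval_eq_eval_mv_eval' ![x₁, x₂] (0 : K) (MvPolynomial.rename σ r)
    rw [MvPolynomial.eval_rename] at h1
    have h2 : (Fin.cons (0 : K) ![x₁, x₂]) ∘ σ = ![x₂, x₁, 0] := by
      funext i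
      fin_cases i <;> simp [hσ, Equiv.swap_apply_def] <;> rfl
    have h3 : MvPolynomial.finSuccEquiv K 2 (MvPolynomial.rename σ r) = E r := by
      rw [hE]; rfl
    rw [h2, h3] at h1
    rw [h1, ← Polynomial.coeff_zero_eq_eval_zero, Polynomial.coeff_map]
  have hne : ¬ ((E F).coeff 0 = 0 ∧ (E B).coeff 0 = 0) := by
    rintro ⟨h1, h2⟩
    refine hroot 0 1 (fun h => one_ne_zero h.2) ⟨?_, ?_⟩
    · rw [← hcoeff F 1 0, h1, map_zero]
    · rw [← hcoeff B 1 0, h2, map_zero]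
  have hrel : IsRelPrime ((E F).coeff 0) ((E B).coeff 0) := by
    refine aux_isRelPrime K _ _ hne ?_
    intro a b hab habs
    refine hroot b a (fun h => hab ⟨h.2, h.1⟩) ⟨?_, ?_⟩
    · rw [← hcoeff F a b]; exact habs.1
    · rw [← hcoeff B a b]; exact habs.2
  -- transfer the hypothesis through `E`
  obtain ⟨u, v, huv⟩ := Ideal.mem_span_pair.mp hq
  have hmem : Polynomial.X * E p ∈ Ideal.span {E F, E B} := by
    refine Ideal.mem_span_pair.mpr ⟨E u, E v, ?_⟩
    have h1 := congrArg E huv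
    rw [map_add, map_mul, map_mul, map_mul, hEX] at h1
    rw [h1]
    ring
  have hconc : E p ∈ Ideal.span {E F, E B} := by
    by_cases hf0 : (E F).coeff 0 = 0
    · have hg0 : (E B).coeff 0 ≠ 0 := fun h => hne ⟨hf0, h⟩
      have hswap : ({E F, E B} : Set (Polynomial (MvPolynomial (Fin 2) K))) = {E B, E F} :=
        Set.pair_comm _ _
      rw [hswap] at hmem ⊢
      exact aux_key (E B) (E F) (E p) hg0 hrel.symm hmem
    · exact aux_key (E F) (E B) (E p) hf0 hrel hmem
  -- transfer back
  obtain ⟨u', v', h2⟩ := Ideal.mem_span_pair.mp hconc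
  refine Ideal.mem_span_pair.mpr ⟨E.symm u', E.symm v', ?_⟩
  have h3 := congrArg E.symm h2
  rw [map_add, map_mul, map_mul] at h3
  simpa using h3
end

section
/- Weierstraß preparation: Let K be a field and let f = Σ_{i=0}^∞ f_i(x) y^i ∈ K[[x]][[y]] be such that there exists a positive integer n satisfying val_x(f_n(x)) = 0 and val_x(f_i(x)) > 0 for all i < n. Then there exist u invertible in K[[x,y]] and g ∈ K[[x]][y] monic of degree n in y such that f = u·g. -/
open PowerSeries Finset

noncomputable section WP

variable {A : Type} [CommRing A]

/-- coefficient of `x^k`, viewed as a power series in `y`. -/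
def wpC (f : PowerSeries (PowerSeries A)) (k : ℕ) : PowerSeries A :=
  PowerSeries.mk fun i => PowerSeries.coeff (R := A) k (PowerSeries.coeff (R := PowerSeries A) i f)

variable (n : ℕ) (w : (PowerSeries A)ˣ) (c : ℕ → PowerSeries A)

/-- The recursively defined pair `(u_k, r_k)`. -/
def wpUR : ℕ → PowerSeries A × PowerSeries A
  | 0 => ((w : PowerSeries A), 0)
  | (k+1) =>
    let e : PowerSeries A := (↑w⁻¹ : PowerSeries A) *
      (c (k+1) - ∑ j : Fin k, (wpUR (j+1)).1 * (wpUR (k-j)).2)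
    ((w : PowerSeries A) * PowerSeries.mk (fun i => PowerSeries.coeff (R := A) (i+n) e),
     PowerSeries.mk (fun i => if i < n then PowerSeries.coeff (R := A) i e else 0))
  termination_by k => k
  decreasing_by
  · exact Nat.succ_lt_succ j.isLt
  · exact Nat.lt_succ_of_le (Nat.sub_le k j)

/-- `g_k`: the `x^k`-coefficient of the distinguished polynomial. -/
def wpG (k : ℕ) : PowerSeries A :=
  if k = 0 then (X : PowerSeries A)^n else (wpUR n w c k).2

lemma wp_trunc_add_shift (e : PowerSeries A) :
    (PowerSeries.mk fun i => if i < n then PowerSeries.coeff (R := A) i e else 0)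
      + X^n * PowerSeries.mk (fun i => PowerSeries.coeff (R := A) (i+n) e) = e := by
  ext i
  simp only [map_add, coeff_mk, coeff_X_pow_mul']
  split_ifs with h h'
  · exact absurd h' (by omega)
  · simp
  · rw [show i - n + n = i by omega, zero_add]
  · omega

lemma wpUR_succ_spec (k : ℕ) :
    (w : PowerSeries A) * (wpUR n w c (k+1)).2 + (wpUR n w c (k+1)).1 * X^n =
      c (k+1) - ∑ j ∈ range k, (wpUR n w c (j+1)).1 * (wpUR n w c (k-j)).2 := by
  rw [wpUR]
  have key : ∀ e : PowerSeries A,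
      (w : PowerSeries A) * (PowerSeries.mk fun i => if i < n then PowerSeries.coeff (R := A) i e else 0)
      + ((w : PowerSeries A) * PowerSeries.mk (fun i => PowerSeries.coeff (R := A) (i+n) e)) * X^n
      = (w : PowerSeries A) * e := by
    intro e
    conv_rhs => rw [← wp_trunc_add_shift n e]
    ring
  rw [key, ← mul_assoc, Units.mul_inv, one_mul, Finset.sum_range]

lemma wpUR_key (hc0 : c 0 = X^n * (w : PowerSeries A)) (k : ℕ) :
    ∑ p ∈ Finset.HasAntidiagonal.antidiagonal k, (wpUR n w c p.1).1 * wpG n w c p.2 = c k := by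
  cases k with
  | zero =>
    simp only [Finset.Nat.antidiagonal_zero, Finset.sum_singleton, wpG, reduceIte, hc0, wpUR]
    ring
  | succ k =>
    rw [Finset.Nat.sum_antidiagonal_eq_sum_range_succ_mk, Finset.sum_range_succ,
      Finset.sum_range_succ']
    have h1 : ∀ i ∈ range k, (wpUR n w c (i+1)).1 * wpG n w c (k+1-(i+1)) =
        (wpUR n w c (i+1)).1 * (wpUR n w c (k-i)).2 := by
      intro i hi
      rw [show k+1-(i+1) = k-i by omega, wpG, if_neg (by simp at hi; omega)]
    rw [Finset.sum_congr rfl h1]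
    rw [show k+1-0 = k+1 by omega, show k+1-(k+1) = 0 by omega]
    rw [wpG, if_neg (Nat.succ_ne_zero k), wpG, if_pos rfl]
    have h0 : (wpUR n w c 0).1 = (w : PowerSeries A) := by rw [wpUR]
    rw [h0, add_assoc, wpUR_succ_spec n w c k]
    ring

lemma wpUR_snd_coeff_of_le (k q : ℕ) (h : n ≤ q) :
    PowerSeries.coeff (R := A) q (wpUR n w c k).2 = 0 := by
  cases k with
  | zero => rw [wpUR]; simp
  | succ k => rw [wpUR]; simp [Nat.not_lt.mpr h]

end WP

theorem weierstrass_preparation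
    (K : Type) [Field K]
    (f : PowerSeries (PowerSeries K)) (n : ℕ) (hn : 0 < n)
    (hfn : PowerSeries.constantCoeff (R := K) (PowerSeries.coeff (R := PowerSeries K) n f) ≠ 0)
    (hfi : ∀ i < n, PowerSeries.constantCoeff (R := K) (PowerSeries.coeff (R := PowerSeries K) i f) = 0) :
    ∃ (u : PowerSeries (PowerSeries K)) (g : Polynomial (PowerSeries K)),
      IsUnit u ∧ g.Monic ∧ g.natDegree = n ∧
      f = u * Polynomial.coeToPowerSeries.ringHom g := by
  classical
  -- the unit part of `c 0 = x^n * w`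
  have hW : IsUnit (PowerSeries.mk fun i =>
      PowerSeries.constantCoeff (R := K) (PowerSeries.coeff (R := PowerSeries K) (i+n) f) : PowerSeries K) := by
    rw [PowerSeries.isUnit_iff_constantCoeff]
    simpa [PowerSeries.constantCoeff_mk] using isUnit_iff_ne_zero.2 hfn
  set w := hW.unit with hwdef
  have hwval : (w : PowerSeries K) = PowerSeries.mk fun i =>
      PowerSeries.constantCoeff (R := K) (PowerSeries.coeff (R := PowerSeries K) (i+n) f) := hW.unit_spec
  have hc0 : wpC f 0 = X^n * (w : PowerSeries K) := by
    ext i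
    rw [hwval]
    simp only [wpC, coeff_mk, coeff_X_pow_mul']
    split_ifs with h
    · rw [show i - n + n = i by omega, PowerSeries.coeff_zero_eq_constantCoeff]
    · rw [PowerSeries.coeff_zero_eq_constantCoeff]
      exact hfi i (by omega)
  -- the unit
  set u : PowerSeries (PowerSeries K) := PowerSeries.mk fun i =>
    PowerSeries.mk fun k => PowerSeries.coeff (R := K) i ((wpUR n w (wpC f) k).1) with hudef
  -- the distinguished polynomial
  set s : ℕ → PowerSeries K := fun i =>
    PowerSeries.mk fun k => PowerSeries.coeff (R := K) i ((wpUR n w (wpC f) k).2) with hsdef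
  set g : Polynomial (PowerSeries K) :=
    Polynomial.X^n + ∑ i ∈ Finset.range n, Polynomial.C (s i) * Polynomial.X^i with hgdef
  have hgcoeff : ∀ q, g.coeff q = (if q = n then 1 else 0) + (if q < n then s q else 0) := by
    intro q
    simp only [hgdef, Polynomial.coeff_add, Polynomial.coeff_X_pow,
      Polynomial.finset_sum_coeff, Polynomial.coeff_C_mul, mul_ite, mul_one, mul_zero]
    congr 1
    rw [Finset.sum_ite_eq (Finset.range n) q s]
    simp [Finset.mem_range]
  have hgn : g.coeff n = 1 := by rw [hgcoeff]; simp
  have hdeg : g.natDegree = n := by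
    refine le_antisymm (Polynomial.natDegree_le_iff_coeff_eq_zero.2 fun q hq => ?_)
      (Polynomial.le_natDegree_of_ne_zero (by rw [hgn]; exact one_ne_zero))
    rw [hgcoeff, if_neg (by omega), if_neg (by omega), add_zero]
  have hmonic : g.Monic := by
    rw [Polynomial.Monic, Polynomial.leadingCoeff, hdeg, hgn]
  -- coefficients of g match `wpG`
  have hG : ∀ t q : ℕ, PowerSeries.coeff (R := K) t (g.coeff q)
      = PowerSeries.coeff (R := K) q (wpG n w (wpC f) t) := by
    intro t q
    rw [hgcoeff]
    rcases lt_trichotomy q n with h | h | h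
    · rw [if_neg (by omega), if_pos h, zero_add, hsdef]
      cases t with
      | zero =>
        have h0 : (wpUR n w (wpC f) 0).2 = 0 := by rw [wpUR]
        simp [wpG, h0, PowerSeries.coeff_X_pow, show ¬ q = n by omega]
      | succ t =>
        rw [wpG, if_neg t.succ_ne_zero, coeff_mk]
    · subst h
      cases t with
      | zero =>
        simp [wpG, PowerSeries.coeff_X_pow, PowerSeries.coeff_one]
      | succ t =>
        simp [wpG, PowerSeries.coeff_one, t.succ_ne_zero,
          wpUR_snd_coeff_of_le q w (wpC f) (t+1) q le_rfl]
    · cases t with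
      | zero =>
        simp [wpG, PowerSeries.coeff_X_pow, show ¬ q < n by omega, show q ≠ n by omega]
      | succ t =>
        simp [wpG, t.succ_ne_zero, show ¬ q < n by omega, show q ≠ n by omega,
          wpUR_snd_coeff_of_le n w (wpC f) (t+1) q (by omega)]
  refine ⟨u, g, ?_, hmonic, hdeg, ?_⟩
  · -- u is a unit
    rw [PowerSeries.isUnit_iff_constantCoeff, hudef, PowerSeries.constantCoeff_mk,
      PowerSeries.isUnit_iff_constantCoeff, PowerSeries.constantCoeff_mk, wpUR, hwval,
      PowerSeries.coeff_zero_eq_constantCoeff, PowerSeries.constantCoeff_mk]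
    simpa using isUnit_iff_ne_zero.2 hfn
  · -- f = u * g
    refine PowerSeries.ext fun i => PowerSeries.ext fun k => ?_
    have h1 : PowerSeries.coeff (R := K) k (PowerSeries.coeff (R := PowerSeries K) i
        (u * Polynomial.coeToPowerSeries.ringHom g)) = PowerSeries.coeff (R := K) i (wpC f k) := by
      rw [PowerSeries.coeff_mul, map_sum]
      simp only [PowerSeries.coeff_mul, hudef, coeff_mk,
        Polynomial.coeToPowerSeries.ringHom_apply, Polynomial.coeff_coe, hG]
      rw [Finset.sum_comm]
      have h2 : ∀ q : ℕ × ℕ, (∑ p ∈ Finset.HasAntidiagonal.antidiagonal i,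
          PowerSeries.coeff (R := K) p.1 ((wpUR n w (wpC f) q.1).1)
            * PowerSeries.coeff (R := K) p.2 (wpG n w (wpC f) q.2))
          = PowerSeries.coeff (R := K) i ((wpUR n w (wpC f) q.1).1 * wpG n w (wpC f) q.2) :=
        fun q => (PowerSeries.coeff_mul _ _ _).symm
      rw [Finset.sum_congr rfl fun q _ => h2 q, ← map_sum, wpUR_key n w (wpC f) hc0 k]
    rw [h1, wpC, coeff_mk]
end

section
/- Fix coprime natural numbers γ_x ≠ 0 and γ_y defining the weighted valuation val on K[[x,y]]. Let f, g ∈ K[[x]][y]. If g is monic in y of degree n and val(g) = val(y^n) = γ_y·n, then the remainder f rem g in the Euclidean division of f by g in K[[x]][y] satisfies val(f rem g) ≥ val(f). -/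
/-!
Fix coprime natural numbers `γx ≠ 0` and `γy` defining the weighted valuation `val` on
`K[[x,y]]` (with `val (x^i y^j) = γx·i + γy·j`).  If `g ∈ K[[x]][y]` is monic in `y` of
degree `n` and `val g = val (y^n) = γy·n`, then the remainder `f %ₘ g` of the Euclidean
division of `f` by `g` satisfies `val (f %ₘ g) ≥ val f`.

We model `K[[x,y]]` as `PowerSeries (PowerSeries K)` (outer variable `y`, inner
variable `x`), and `K[[x]][y]` as `Polynomial (PowerSeries K)`, embedded via
`Polynomial.coeToPowerSeries.ringHom`.
-/

noncomputable section

/-- coefficient of `x^i y^j`. -/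
def coeff2 {K : Type} [Field K] (i j : ℕ) (a : PowerSeries (PowerSeries K)) : K :=
  PowerSeries.coeff (R := K) i (PowerSeries.coeff (R := PowerSeries K) j a)

/-- the weighted valuation attached to the weights `γx`, `γy`. -/
def wval {K : Type} [Field K] (γx γy : ℕ) (a : PowerSeries (PowerSeries K)) : ℕ∞ :=
  ⨅ (i : ℕ) (j : ℕ) (_ : coeff2 i j a ≠ 0), ((γx * i + γy * j : ℕ) : ℕ∞)

variable {K : Type} [Field K] {γx γy : ℕ}

lemma le_wval {m : ℕ∞} {a : PowerSeries (PowerSeries K)} :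
    m ≤ wval γx γy a ↔ ∀ i j, coeff2 i j a ≠ 0 → m ≤ ((γx * i + γy * j : ℕ) : ℕ∞) := by
  simp [wval, le_iInf_iff]

lemma wval_le {a : PowerSeries (PowerSeries K)} {i j : ℕ} (h : coeff2 i j a ≠ 0) :
    wval γx γy a ≤ ((γx * i + γy * j : ℕ) : ℕ∞) :=
  le_wval.mp le_rfl i j h

lemma min_le_wval_sub (a b : PowerSeries (PowerSeries K)) :
    min (wval γx γy a) (wval γx γy b) ≤ wval γx γy (a - b) := by
  rw [le_wval]
  intro i j h
  have hsub : coeff2 i j (a - b) = coeff2 i j a - coeff2 i j b := by simp [coeff2]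
  have : coeff2 i j a ≠ 0 ∨ coeff2 i j b ≠ 0 := by
    by_contra hc
    push_neg at hc
    rw [hsub, hc.1, hc.2, sub_zero] at h
    exact h rfl
  rcases this with h' | h'
  · exact le_trans (min_le_left _ _) (wval_le h')
  · exact le_trans (min_le_right _ _) (wval_le h')

lemma add_le_wval_mul (a b : PowerSeries (PowerSeries K)) :
    wval γx γy a + wval γx γy b ≤ wval γx γy (a * b) := by
  rw [le_wval]
  intro i j h
  have : coeff2 i j (a * b) =
      ∑ p ∈ Finset.HasAntidiagonal.antidiagonal j, ∑ q ∈ Finset.HasAntidiagonal.antidiagonal i,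
        coeff2 q.1 p.1 a * coeff2 q.2 p.2 b := by
    simp [coeff2, PowerSeries.coeff_mul, map_sum]
  rw [this] at h
  obtain ⟨p, hp, hne⟩ := Finset.exists_ne_zero_of_sum_ne_zero h
  obtain ⟨q, hq, hne⟩ := Finset.exists_ne_zero_of_sum_ne_zero hne
  have h1 : coeff2 q.1 p.1 a ≠ 0 := left_ne_zero_of_mul hne
  have h2 : coeff2 q.2 p.2 b ≠ 0 := right_ne_zero_of_mul hne
  rw [Finset.HasAntidiagonal.mem_antidiagonal] at hp hq
  calc wval γx γy a + wval γx γy b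
      ≤ ((γx * q.1 + γy * p.1 : ℕ) : ℕ∞) + ((γx * q.2 + γy * p.2 : ℕ) : ℕ∞) :=
        add_le_add (wval_le h1) (wval_le h2)
    _ = ((γx * i + γy * j : ℕ) : ℕ∞) := by
        rw [← Nat.cast_add]; congr 1; rw [← hq, ← hp]; ring

lemma coeff2_coe (p : Polynomial (PowerSeries K)) (i j : ℕ) :
    coeff2 i j (Polynomial.coeToPowerSeries.ringHom p) = PowerSeries.coeff (R := K) i (p.coeff j) := by
  simp [coeff2, Polynomial.coeToPowerSeries.ringHom_apply, Polynomial.coeff_coe]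

theorem wval_modByMonic_ge
    (K : Type) [Field K] (γx γy : ℕ) (hγx : γx ≠ 0) (hcop : Nat.Coprime γx γy)
    (f g : Polynomial (PowerSeries K)) (n : ℕ)
    (hg : g.Monic) (hn : g.natDegree = n)
    (hval : wval γx γy (Polynomial.coeToPowerSeries.ringHom g) = ((γy * n : ℕ) : ℕ∞)) :
    wval γx γy (Polynomial.coeToPowerSeries.ringHom f)
      ≤ wval γx γy (Polynomial.coeToPowerSeries.ringHom (f %ₘ g)) := by
  classical
  set π := (Polynomial.coeToPowerSeries.ringHom : Polynomial (PowerSeries K) →+* _) with hπ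
  suffices H : ∀ d (f : Polynomial (PowerSeries K)), f.natDegree < d →
      wval γx γy (π f) ≤ wval γx γy (π (f %ₘ g)) from H (f.natDegree + 1) f (Nat.lt_succ_self _)
  intro d
  induction d with
  | zero => intro f hf; omega
  | succ d ih =>
    intro f hf
    by_cases hdeg : f.degree < g.degree
    · rw [(Polynomial.modByMonic_eq_self_iff hg).mpr hdeg]
    · push_neg at hdeg
      have hf0 : f ≠ 0 := by
        rintro rfl
        rw [Polynomial.degree_zero, le_bot_iff, Polynomial.degree_eq_bot] at hdeg
        exact hg.ne_zero hdeg
      have hnd : n ≤ f.natDegree := by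
        rw [← hn]; exact Polynomial.natDegree_le_natDegree hdeg
      set c := f.leadingCoeff with hc
      have hc0 : c ≠ 0 := Polynomial.leadingCoeff_ne_zero.mpr hf0
      set k := f.natDegree - n with hk
      set q : Polynomial (PowerSeries K) := Polynomial.C c * Polynomial.X ^ k with hq
      set h : Polynomial (PowerSeries K) := f - q * g with hh
      -- degree facts
      have hdq : (q * g).degree = f.degree := by
        rw [Polynomial.degree_mul, Polynomial.degree_C_mul_X_pow k hc0,
          Polynomial.degree_eq_natDegree hg.ne_zero, hn, Polynomial.degree_eq_natDegree hf0]
        have hkn : k + n = f.natDegree := by omega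
        exact_mod_cast congrArg (Nat.cast : ℕ → WithBot ℕ) hkn
      have hlcq : (q * g).leadingCoeff = c := by
        rw [Polynomial.leadingCoeff_mul, Polynomial.leadingCoeff_C_mul_X_pow,
          Polynomial.Monic.leadingCoeff hg, mul_one]
      have hdh : h.degree < f.degree := by
        rw [hh]
        exact Polynomial.degree_sub_lt hdq.symm hf0 (by rw [hlcq])
      have hmod : f %ₘ g = h %ₘ g := by
        rw [hh, Polynomial.sub_modByMonic,
          (Polynomial.modByMonic_eq_zero_iff_dvd hg).mpr (dvd_mul_left g q), sub_zero]
      -- valuation facts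
      -- i0: the least index with nonzero coeff of c
      have hex : ∃ i, PowerSeries.coeff (R := K) i c ≠ 0 := by
        by_contra hcon
        push_neg at hcon
        exact hc0 (PowerSeries.ext fun i => by simpa using hcon i)
      set i0 := Nat.find hex with hi0
      have hi0ne : PowerSeries.coeff (R := K) i0 c ≠ 0 := Nat.find_spec hex
      have hfub : wval γx γy (π f) ≤ ((γx * i0 + γy * f.natDegree : ℕ) : ℕ∞) := by
        apply wval_le
        rw [coeff2_coe]
        rw [hc, ← Polynomial.coeff_natDegree] at hi0ne
        exact hi0ne
      have hqlb : ((γx * i0 + γy * k : ℕ) : ℕ∞) ≤ wval γx γy (π q) := by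
        rw [le_wval]
        intro i j hij
        rw [coeff2_coe] at hij
        have hjk : j = k := by
          by_contra hjk
          rw [hq, Polynomial.coeff_C_mul, Polynomial.coeff_X_pow, if_neg hjk, mul_zero, map_zero] at hij
          exact hij rfl
        subst hjk
        rw [hq, Polynomial.coeff_C_mul, Polynomial.coeff_X_pow, if_pos rfl, mul_one] at hij
        have : i0 ≤ i := Nat.find_le hij
        exact Nat.cast_le.mpr (by nlinarith)
      have hqg : wval γx γy (π f) ≤ wval γx γy (π (q * g)) := by
        rw [map_mul]
        calc wval γx γy (π f) ≤ ((γx * i0 + γy * f.natDegree : ℕ) : ℕ∞) := hfub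
          _ = ((γx * i0 + γy * k : ℕ) : ℕ∞) + ((γy * n : ℕ) : ℕ∞) := by
              rw [← Nat.cast_add]; congr 1
              have : k + n = f.natDegree := by omega
              nlinarith [this]
          _ ≤ wval γx γy (π q) + wval γx γy (π g) := by
              rw [hval]; exact add_le_add_left hqlb _
          _ ≤ wval γx γy (π q * π g) := add_le_wval_mul _ _
      have hfh : wval γx γy (π f) ≤ wval γx γy (π h) := by
        have : π h = π f - π (q * g) := by rw [hh, map_sub]
        rw [this]
        exact le_trans (le_min le_rfl hqg) (min_le_wval_sub _ _)
      rw [hmod]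
      rcases eq_or_ne h 0 with h0 | h0
      · rw [h0, Polynomial.zero_modByMonic, map_zero]
        exact le_wval.mpr fun i j hij => absurd (by simp [coeff2]) hij
      · exact le_trans hfh (ih h (Nat.lt_of_lt_of_le
          (Polynomial.natDegree_lt_natDegree h0 hdh) (by omega)))

end
end
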